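/- arXiv:1206.1763 — 2 statements merged into one kernel-verified Lean document; each statement's English description precedes it below -/
import Mathlib

section
/- Let A and D be self-adjoint operators on a Hilbert space with common domain, P a bounded self-adjoint operator of finite rank such that the commutator identities make sense, and suppose A = D + A_0 + Ã where A_0, Ã are bounded self-adjoint operators and A_0 = i[P, D]. Then ‖e^{-iP} A e^{iP} − (D + Ã)‖ ≤ ‖[P, Ã]‖ + (1/2)‖[[D,P],P]‖. -/
open NormedSpace

set_option maxHeartbeats 1000000
set_option synthInstance.maxHeartbeats 200000


/-- Lemma 4.1. Let `A = D + A₀ + Ã` with `A`, `D`, `A₀`, `Ã`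
self-adjoint, `P` self-adjoint of finite rank, and `A₀ = i[P, D]` (so `P`
solves the commutator equation `A₀ + [D, iP] = 0`). Then
`‖e^{-iP} A e^{iP} − (D + Ã)‖ ≤ ‖[P, Ã]‖ + (1/2)‖[[D,P],P]‖`. -/
theorem conjugation_estimate
    {H : Type*} [NormedAddCommGroup H] [InnerProductSpace ℂ H] [CompleteSpace H]
    (A D A₀ Atil P : H →L[ℂ] H)
    (hA : IsSelfAdjoint A) (hD : IsSelfAdjoint D) (hA₀ : IsSelfAdjoint A₀)
    (hAtil : IsSelfAdjoint Atil) (hP : IsSelfAdjoint P)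
    (hrank : FiniteDimensional ℂ (LinearMap.range (P : H →ₗ[ℂ] H)))
    (hsum : A = D + A₀ + Atil)
    (hcomm : A₀ = Complex.I • (P * D - D * P)) :
    ‖NormedSpace.exp (-(Complex.I • P)) * A * NormedSpace.exp (Complex.I • P) - (D + Atil)‖
      ≤ ‖P * Atil - Atil * P‖
        + (1 / 2) * ‖(D * P - P * D) * P - P * (D * P - P * D)‖ := by
  rcases subsingleton_or_nontrivial H with hH | hH
  · have h0 : ∀ X : H →L[ℂ] H, ‖X‖ = 0 := fun X => by
      rw [Subsingleton.elim X 0, norm_zero]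
    rw [h0, h0, h0]; norm_num
  set Q : H →L[ℂ] H := Complex.I • P with hQdef
  -- Q is skew-adjoint, hence exp(s•Q) is unitary
  have hIskew : Complex.I ∈ skewAdjoint ℂ := by
    rw [skewAdjoint.mem_iff]; simpa using Complex.conj_I
  have hQskew : Q ∈ skewAdjoint (H →L[ℂ] H) := hP.smul_mem_skewAdjoint hIskew
  have hunit : ∀ s : ℝ, exp (s • Q) ∈ unitary (H →L[ℂ] H) := by
    intro s
    letI : NormedAlgebra ℚ (H →L[ℂ] H) := NormedAlgebra.restrictScalars ℚ ℂ (H →L[ℂ] H)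
    apply exp_mem_unitary_of_mem_skewAdjoint
    rw [skewAdjoint.mem_iff] at hQskew ⊢
    rw [star_smul, star_trivial, hQskew, smul_neg]
  have hconj : ∀ (s : ℝ) (X : H →L[ℂ] H),
      ‖exp (-(s • Q)) * X * exp (s • Q)‖ = ‖X‖ := by
    intro s X
    have h1 : exp (-(s • Q)) ∈ unitary (H →L[ℂ] H) := by
      rw [← neg_smul]; exact hunit (-s)
    rw [CStarRing.norm_mul_mem_unitary _ (hunit s), CStarRing.norm_mem_unitary_mul _ h1]
  -- exponential derivative facts (real parameter)
  have hEder : ∀ s : ℝ, HasDerivAt (fun u : ℝ => exp (u • Q)) (exp (s • Q) * Q) s :=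
    fun s => hasDerivAt_exp_smul_const (𝕂 := ℝ) Q s
  have hEneg : ∀ s : ℝ, HasDerivAt (fun u : ℝ => exp (-(u • Q)))
     (-(exp (-(s • Q)) * Q)) s := by
    intro s
    have hfun : (fun u : ℝ => exp (-(u • Q)))
        = (fun u : ℝ => exp (u • Q)) ∘ (fun u : ℝ => -u) := by
      ext u; simp [neg_smul]
    rw [hfun]
    have h := HasDerivAt.scomp (𝕜 := ℝ) s (hEder (-s)) (hasDerivAt_neg s)
    refine h.congr_deriv ?_
    rw [neg_smul]
    simp
  -- the interpolating family
  have hA₀eq : A₀ = Q * D - D * Q := by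
    rw [hcomm, hQdef]
    rw [smul_mul_assoc, mul_smul_comm, smul_sub]
  set M : ℝ → (H →L[ℂ] H) := fun s => D + s • A₀ + Atil with hMdef
  set R : ℝ → (H →L[ℂ] H) :=
    fun s => s • (A₀ * Q - Q * A₀) + (Atil * Q - Q * Atil) with hRdef
  set f : ℝ → (H →L[ℂ] H) := fun s => exp (-(s • Q)) * M s * exp (s • Q) with hfdef
  have hMder : ∀ s : ℝ, HasDerivAt M A₀ s := by
    intro s
    have h := (((hasDerivAt_id s).smul_const A₀).const_add D).add_const Atil
    simpa [hMdef] using h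
  have hcomQ : ∀ s : ℝ, Q * exp (s • Q) = exp (s • Q) * Q := by
    intro s
    exact ((Commute.refl Q).smul_right s).exp_right
  have hfder : ∀ s : ℝ, HasDerivAt f (exp (-(s • Q)) * R s * exp (s • Q)) s := by
    intro s
    have h := ((hEneg s).mul (hMder s)).mul (hEder s)
    refine h.congr_deriv ?_
    rw [Pi.mul_apply]
    have hc : exp (s • Q) * Q = Q * exp (s • Q) := (hcomQ s).symm
    generalize hE1 : exp (-(s • Q)) = E₁ at *
    generalize hE2 : exp (s • Q) = E₂ at *
    have key : R s = -(Q * M s) + A₀ + M s * Q := by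
      simp only [hMdef, hRdef, mul_add, add_mul, sub_mul, mul_sub, mul_smul_comm,
        smul_mul_assoc, smul_sub, smul_add, hA₀eq]
      abel
    rw [key]
    rw [show (-(E₁ * Q) * M s + E₁ * A₀) * E₂ + E₁ * M s * (E₂ * Q)
        = (-(E₁ * Q) * M s + E₁ * A₀) * E₂ + E₁ * M s * (Q * E₂) from by rw [hc]]
    noncomm_ring
  -- constants
  set C₁ : ℝ := ‖P * Atil - Atil * P‖ with hC₁
  set C₂ : ℝ := ‖(D * P - P * D) * P - P * (D * P - P * D)‖ with hC₂
  have hR1 : ‖Atil * Q - Q * Atil‖ = C₁ := by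
    have he : Atil * Q - Q * Atil = Complex.I • (Atil * P - P * Atil) := by
      rw [hQdef, smul_mul_assoc, mul_smul_comm, smul_sub]
    rw [he, norm_smul, Complex.norm_I, one_mul, ← neg_sub, norm_neg]
  have hII : ∀ (U V : H →L[ℂ] H), (Complex.I • U) * (Complex.I • V) = -(U * V) := by
    intro U V
    rw [smul_mul_assoc, mul_smul_comm, smul_smul, Complex.I_mul_I, neg_one_smul]
  have hR2 : A₀ * Q - Q * A₀ = (D * P - P * D) * P - P * (D * P - P * D) := by
    rw [hcomm, hQdef, hII, hII]
    noncomm_ring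
  have hRbound : ∀ s ∈ Set.Ico (0:ℝ) 1, ‖R s‖ ≤ C₁ + C₂ * s := by
    intro s hs
    rw [hRdef]
    calc ‖s • (A₀ * Q - Q * A₀) + (Atil * Q - Q * Atil)‖
        ≤ ‖s • (A₀ * Q - Q * A₀)‖ + ‖Atil * Q - Q * Atil‖ := norm_add_le _ _
      _ = s * C₂ + C₁ := by
          rw [norm_smul, Real.norm_eq_abs, abs_of_nonneg hs.1, hR1, hR2]
      _ = C₁ + C₂ * s := by ring
  -- mean value inequality
  set g : ℝ → (H →L[ℂ] H) := fun s => f s - f 0 with hgdef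
  set B : ℝ → ℝ := fun s => C₁ * s + C₂ * (s ^ 2 / 2) with hBdef
  have hBder : ∀ s : ℝ, HasDerivAt B (C₁ + C₂ * s) s := by
    intro s
    have h1 : HasDerivAt (fun s : ℝ => C₁ * s) C₁ s := by
      simpa using (hasDerivAt_id s).const_mul C₁
    have h2 : HasDerivAt (fun s : ℝ => C₂ * (s ^ 2 / 2)) (C₂ * s) s := by
      have := ((hasDerivAt_pow 2 s).div_const 2).const_mul C₂
      refine this.congr_deriv ?_
      ring
    exact h1.add h2
  have hbound := image_norm_le_of_norm_deriv_right_le_deriv_boundary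
    (f := g) (f' := fun s => exp (-(s • Q)) * R s * exp (s • Q)) (a := 0) (b := 1)
    (fun x _ => (((hfder x).sub_const (f 0)).continuousAt).continuousWithinAt)
    (fun x _ => ((hfder x).sub_const (f 0)).hasDerivWithinAt)
    (by simp [hgdef, hBdef]) hBder
    (by
      intro x hx
      rw [hconj]
      exact hRbound x hx)
  have h1 := hbound (Set.right_mem_Icc.mpr zero_le_one)
  have hg1 : g 1 = exp (-Q) * A * exp Q - (D + Atil) := by
    rw [hgdef, hfdef, hMdef]
    simp only [one_smul, zero_smul, neg_zero, exp_zero, one_mul, mul_one, add_zero, hsum]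
  rw [hg1] at h1
  calc ‖exp (-Q) * A * exp Q - (D + Atil)‖
      ≤ B 1 := h1
    _ = C₁ + 1 / 2 * C₂ := by rw [hBdef]; ring
end

section
/- Let D be a self-adjoint operator and P a bounded self-adjoint finite rank operator on a Hilbert space (so that [D,P] and [[D,P],P] are bounded). Define G(s) = e^{-isP}(D + is[P,D])e^{isP} − D. Then ‖G(1)‖ ≤ (1/2)‖[[D,P],P]‖. -/
open NormedSpace Complex

set_option maxHeartbeats 1000000


/-- For a self-adjoint `D` and a self-adjoint finite rank
bounded `P` on a complex Hilbert space, with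
`G(s) = e^{-isP}(D + is[P,D])e^{isP} − D`, one has
`‖G(1)‖ ≤ (1/2)‖[[D,P],P]‖`. -/
theorem conjugation_double_commutator_bound
    {H : Type*} [NormedAddCommGroup H] [InnerProductSpace ℂ H] [CompleteSpace H]
    (D P : H →L[ℂ] H) (hD : IsSelfAdjoint D) (hP : IsSelfAdjoint P)
    (hrank : FiniteDimensional ℂ (LinearMap.range (P : H →ₗ[ℂ] H)))
    (G : ℝ → H →L[ℂ] H)
    (hG : ∀ s : ℝ, G s = NormedSpace.exp (-((s : ℂ) • (Complex.I • P)))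
      * (D + (Complex.I * s) • (P * D - D * P))
      * NormedSpace.exp ((s : ℂ) • (Complex.I • P)) - D) :
    ‖G 1‖ ≤ (1 / 2) * ‖(D * P - P * D) * P - P * (D * P - P * D)‖ := by
  rcases subsingleton_or_nontrivial H with hH | hH
  · have : G 1 = 0 := Subsingleton.elim _ _
    rw [this, norm_zero]
    positivity
  set B : H →L[ℂ] H := Complex.I • P with hB
  set K : H →L[ℂ] H := P * D - D * P with hK
  set C : H →L[ℂ] H := (D * P - P * D) * P - P * (D * P - P * D) with hC
  -- rewrite G into a convenient form
  have hG' : G = fun t : ℝ => NormedSpace.exp ((t : ℂ) • (-B)) * (D + (t : ℂ) • (Complex.I • K))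
      * NormedSpace.exp ((t : ℂ) • B) - D := by
    funext t
    rw [hG t, show -(((t:ℂ)) • B) = (t : ℂ) • (-B) from (smul_neg _ _).symm,
      show (Complex.I * (t : ℂ)) • K = (t : ℂ) • (Complex.I • K) from by
        rw [smul_smul, mul_comm]]
  -- the inner algebraic identity
  have key : ∀ s : ℝ, -(B * (D + (s : ℂ) • (Complex.I • K))) + Complex.I • K
      + (D + (s : ℂ) • (Complex.I • K)) * B = (s : ℂ) • C := by
    intro s
    rw [show (s : ℂ) • (Complex.I • K) = (Complex.I * (s : ℂ)) • K from by
      rw [smul_smul, mul_comm], hB, hK, hC]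
    simp only [mul_add, add_mul, mul_sub, sub_mul, smul_mul_assoc, mul_smul_comm, smul_smul,
      smul_sub, smul_add, neg_mul, mul_neg, neg_smul, smul_neg, mul_assoc, neg_add, neg_neg,
      neg_sub]
    rw [show Complex.I * (Complex.I * (s : ℂ)) = -(s : ℂ) by
        rw [← mul_assoc, I_mul_I]; ring,
      show Complex.I * ((s : ℂ) * Complex.I) = -(s : ℂ) by
        rw [mul_comm (s : ℂ) Complex.I, ← mul_assoc, I_mul_I]; ring]
    module
  -- derivative of G
  have hderiv : ∀ s : ℝ, HasDerivAt G
      (NormedSpace.exp ((s : ℂ) • (-B)) * ((s : ℂ) • C) * NormedSpace.exp ((s : ℂ) • B)) s := by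
    intro s
    rw [hG']
    have h1 : HasDerivAt (fun t : ℝ => NormedSpace.exp ((t : ℂ) • (-B)))
        ((-B) * NormedSpace.exp ((s : ℂ) • (-B))) s := by
      have h := hasDerivAt_exp_smul_const' (𝕂 := ℂ) (-B) (s : ℂ)
      simpa [Function.comp_def] using h.scomp s ofRealCLM.hasDerivAt
    have h2 : HasDerivAt (fun t : ℝ => D + (t : ℂ) • (Complex.I • K)) (Complex.I • K) s := by
      have h := ((hasDerivAt_id (s : ℂ)).smul_const (Complex.I • K)).const_add D
      simpa [Function.comp_def] using h.scomp s ofRealCLM.hasDerivAt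
    have h3 : HasDerivAt (fun t : ℝ => NormedSpace.exp ((t : ℂ) • B)) (NormedSpace.exp ((s : ℂ) • B) * B) s := by
      have h := hasDerivAt_exp_smul_const (𝕂 := ℂ) B (s : ℂ)
      simpa [Function.comp_def] using h.scomp s ofRealCLM.hasDerivAt
    have total := ((h1.mul h2).mul h3).sub_const D
    refine total.congr_deriv (Eq.symm ?_)
    simp only [Pi.mul_apply]
    have hc1 : (-B) * NormedSpace.exp ((s : ℂ) • (-B)) = NormedSpace.exp ((s : ℂ) • (-B)) * (-B) :=
      (((Commute.refl (-B)).smul_right ((s : ℂ))).exp_right).eq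
    have hc2 : NormedSpace.exp ((s : ℂ) • B) * B = B * NormedSpace.exp ((s : ℂ) • B) :=
      ((((Commute.refl B).smul_right ((s : ℂ))).exp_right).symm).eq
    rw [hc1, hc2, ← key s]
    noncomm_ring
    simp only [neg_one_smul, smul_neg]
    abel
  -- G 0 = 0
  have hG0 : G 0 = 0 := by
    rw [hG 0]
    simp only [Complex.ofReal_zero, zero_smul, neg_zero, NormedSpace.exp_zero, mul_zero,
      add_zero, one_mul, mul_one, sub_self]
  letI : NormedAlgebra ℚ (H →L[ℂ] H) := .restrictScalars ℚ ℂ _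
  -- continuity of the derivative
  have hcont : Continuous fun s : ℝ =>
      NormedSpace.exp ((s : ℂ) • (-B)) * ((s : ℂ) • C) * NormedSpace.exp ((s : ℂ) • B) := by
    have c0 : Continuous fun s : ℝ => (s : ℂ) := Complex.continuous_ofReal
    exact ((exp_continuous.comp (c0.smul continuous_const)).mul
      (c0.smul continuous_const)).mul (exp_continuous.comp (c0.smul continuous_const))
  -- FTC
  have hint : ∫ s in (0:ℝ)..1,
      NormedSpace.exp ((s : ℂ) • (-B)) * ((s : ℂ) • C) * NormedSpace.exp ((s : ℂ) • B) = G 1 - G 0 :=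
    intervalIntegral.integral_eq_sub_of_hasDerivAt (fun s _ => hderiv s)
      (hcont.intervalIntegrable 0 1)
  -- skew-adjointness and unitarity
  have hsk : ∀ t : ℝ, (t : ℂ) • B ∈ skewAdjoint (H →L[ℂ] H) := by
    intro t
    rw [skewAdjoint.mem_iff]
    simp [hB, star_smul, Complex.star_def, Complex.conj_ofReal, Complex.conj_I, hP.star_eq,
      smul_smul]
  have hsk' : ∀ t : ℝ, (t : ℂ) • (-B) ∈ skewAdjoint (H →L[ℂ] H) := by
    intro t
    rw [smul_neg]
    exact neg_mem (hsk t)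
  -- norm bound on the derivative
  have hnorm : ∀ s : ℝ, s ∈ Set.uIoc (0:ℝ) 1 →
      ‖NormedSpace.exp ((s : ℂ) • (-B)) * ((s : ℂ) • C) * NormedSpace.exp ((s : ℂ) • B)‖ ≤ s * ‖C‖ := by
    intro s hs
    have hu1 : NormedSpace.exp ((s : ℂ) • (-B)) ∈ unitary (H →L[ℂ] H) :=
      exp_mem_unitary_of_mem_skewAdjoint (hsk' s)
    have hu2 : NormedSpace.exp ((s : ℂ) • B) ∈ unitary (H →L[ℂ] H) :=
      exp_mem_unitary_of_mem_skewAdjoint (hsk s)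
    calc ‖NormedSpace.exp ((s : ℂ) • (-B)) * ((s : ℂ) • C) * NormedSpace.exp ((s : ℂ) • B)‖
        = ‖NormedSpace.exp ((s : ℂ) • (-B)) * ((s : ℂ) • C)‖ :=
          CStarRing.norm_mul_coe_unitary _ ⟨_, hu2⟩
      _ = ‖(s : ℂ) • C‖ := CStarRing.norm_coe_unitary_mul ⟨_, hu1⟩ _
      _ = |s| * ‖C‖ := by rw [norm_smul, Complex.norm_real, Real.norm_eq_abs]
      _ ≤ s * ‖C‖ := by
          rw [Set.uIoc_of_le (by norm_num : (0:ℝ) ≤ 1)] at hs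
          rw [abs_of_pos hs.1]
  -- conclude
  have hmeas : IntervalIntegrable (fun s : ℝ => s * ‖C‖) MeasureTheory.volume 0 1 :=
    (continuous_id.mul continuous_const).intervalIntegrable 0 1
  have := intervalIntegral.norm_integral_le_abs_of_norm_le (μ := MeasureTheory.volume)
    (a := (0:ℝ)) (b := 1)
    (MeasureTheory.ae_restrict_of_forall_mem measurableSet_uIoc hnorm) hmeas
  rw [hint, hG0, sub_zero] at this
  calc ‖G 1‖ ≤ |∫ s in (0:ℝ)..1, s * ‖C‖| := this
    _ = (1/2) * ‖C‖ := by
        rw [intervalIntegral.integral_mul_const, integral_id]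
        rw [_root_.abs_of_nonneg (by positivity)]
        norm_num
end
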